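/- Every k-algebra automorphism φ of the Grassmann algebra Λ(n) that preserves the ℤ/2-grading and commutes with all derivations ∂/∂ξ_i and with the degree-zero action of gl_n is the identity. More precisely: if φ ∈ Aut Λ(n)(R) (R a commutative k-algebra) satisfies φ D = D φ for all D ∈ W(n)(R), then φ = id; i.e., the conjugation homomorphism Ad : Aut Λ(n) → Aut W(n) has trivial kernel. -/

import Mathlib

open ExteriorAlgebra

section

variable (R : Type*) [CommRing R] (n : ℕ)

/-- The degree-one part `V = Λ(n)₁` of the Grassmann algebra over `R`. -/
noncomputable def grassV : Submodule R (ExteriorAlgebra R (Fin n → R)) :=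
  LinearMap.range (ι R : (Fin n → R) →ₗ[R] ExteriorAlgebra R (Fin n → R))

/-- The even part of the Grassmann algebra. -/
noncomputable def evenSub : Submodule R (ExteriorAlgebra R (Fin n → R)) :=
  ⨆ j : ℕ, grassV R n ^ (2 * j)

/-- The odd part of the Grassmann algebra. -/
noncomputable def oddSub : Submodule R (ExteriorAlgebra R (Fin n → R)) :=
  ⨆ j : ℕ, grassV R n ^ (2 * j + 1)

/-- A homogeneous superderivation of the Grassmann algebra of parity `p`
(`p = true` means odd): it shifts parity by `p` and satisfies the signed Leibniz
rule. Elements of `W(n)(R)` are sums of such. -/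
def IsSuperDer (p : Bool) (D : Module.End R (ExteriorAlgebra R (Fin n → R))) : Prop :=
  (if p then
      (∀ a ∈ evenSub R n, D a ∈ oddSub R n) ∧ (∀ a ∈ oddSub R n, D a ∈ evenSub R n)
    else
      (∀ a ∈ evenSub R n, D a ∈ evenSub R n) ∧ (∀ a ∈ oddSub R n, D a ∈ oddSub R n)) ∧
  (∀ a ∈ evenSub R n, ∀ b, D (a * b) = D a * b + a * D b) ∧
  (∀ a ∈ oddSub R n, ∀ b, D (a * b) = D a * b + (if p then (-1 : R) else 1) • (a * D b))

end

section Aux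

variable {R : Type*} [CommRing R] {n : ℕ}

local notation "Λ" => ExteriorAlgebra R (Fin n → R)

/-- The contraction operator on the exterior algebra. -/
noncomputable def grassC (f : Module.Dual R (Fin n → R)) : Module.End R Λ :=
  CliffordAlgebra.contractLeft (Q := (0 : QuadraticForm R (Fin n → R))) f

lemma grassC_ι_mul (f : Module.Dual R (Fin n → R)) (v : Fin n → R) (b : Λ) :
    grassC f (ι R v * b) = f v • b - ι R v * grassC f b :=
  CliffordAlgebra.contractLeft_ι_mul _ _ _

lemma grassC_algebraMap (f : Module.Dual R (Fin n → R)) (r : R) :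
    grassC f (algebraMap R Λ r) = 0 :=
  CliffordAlgebra.contractLeft_algebraMap _ _ _

lemma grassC_ι (f : Module.Dual R (Fin n → R)) (v : Fin n → R) :
    grassC f (ι R v) = algebraMap R Λ (f v) :=
  CliffordAlgebra.contractLeft_ι _ _ _

/-- Sign-commutation of `ι v` with elements of `V^m`. -/
lemma iota_mul_comm (v : Fin n → R) {m : ℕ} {a : Λ} (ha : a ∈ grassV R n ^ m) :
    ι R v * a = ((-1 : R) ^ m) • (a * ι R v) := by
  induction ha using Submodule.pow_induction_on_left' with
  | algebraMap r =>
      simp [pow_zero, Algebra.commutes, Algebra.smul_def, mul_comm]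
  | add x y i hx hy ihx ihy =>
      simp only [mul_add, add_mul, smul_add, ihx, ihy]
  | mem_mul w hw i x hx ih =>
      obtain ⟨u, rfl⟩ := hw
      have h1 : ι R v * ι R u = -(ι R u * ι R v) :=
        eq_neg_of_add_eq_zero_left (ι_add_mul_swap v u)
      rw [← mul_assoc, h1, neg_mul, mul_assoc, ih, mul_smul_comm, pow_succ, mul_neg_one,
        neg_smul, mul_assoc]

/-- Contraction lowers powers. -/
lemma grassC_pow_mem (f : Module.Dual R (Fin n → R)) {m : ℕ} {a : Λ}
    (ha : a ∈ grassV R n ^ m) : grassC f a ∈ grassV R n ^ (m - 1) := by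
  induction ha using Submodule.pow_induction_on_left' with
  | algebraMap r => rw [grassC_algebraMap]; exact Submodule.zero_mem _
  | add x y i hx hy ihx ihy => rw [map_add]; exact Submodule.add_mem _ ihx ihy
  | mem_mul w hw i x hx ih =>
      obtain ⟨u, rfl⟩ := hw
      rw [grassC_ι_mul]
      refine Submodule.sub_mem _ (Submodule.smul_mem _ _ (by simpa using hx)) ?_
      rcases Nat.eq_zero_or_pos i with rfl | hi
      · rw [pow_zero] at hx
        obtain ⟨r, rfl⟩ := Submodule.mem_one.mp hx
        rw [grassC_algebraMap, mul_zero]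
        exact Submodule.zero_mem _
      · have h3 : ι R u * grassC f x ∈ grassV R n ^ 1 * grassV R n ^ (i - 1) :=
          Submodule.mul_mem_mul (by simpa [pow_one] using ⟨u, rfl⟩) ih
        have h2 : grassV R n ^ 1 * grassV R n ^ (i - 1) = grassV R n ^ i := by
          rw [← pow_add]; congr 1; omega
        rw [h2] at h3
        simpa using h3

/-- Signed Leibniz rule for contraction. -/
lemma grassC_leibniz (f : Module.Dual R (Fin n → R)) {m : ℕ} {a : Λ}
    (ha : a ∈ grassV R n ^ m) (b : Λ) :
    grassC f (a * b) = grassC f a * b + ((-1 : R) ^ m) • (a * grassC f b) := by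
  induction ha using Submodule.pow_induction_on_left' generalizing b with
  | algebraMap r =>
      rw [grassC_algebraMap, zero_mul, zero_add, pow_zero, one_smul,
        Algebra.algebraMap_eq_smul_one, smul_mul_assoc, one_mul, map_smul,
        smul_mul_assoc, one_mul]
  | add x y i hx hy ihx ihy =>
      simp only [add_mul, map_add, ihx, ihy, smul_add]
      abel
  | mem_mul w hw i x hx ih =>
      obtain ⟨u, rfl⟩ := hw
      have L : grassC f (ι R u * x * b)
          = f u • (x * b) - ι R u * (grassC f x * b + ((-1 : R) ^ i) • (x * grassC f b)) := by
        rw [mul_assoc, grassC_ι_mul, ih]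
      have Rr : grassC f (ι R u * x) = f u • x - ι R u * grassC f x := grassC_ι_mul f u x
      rw [L, Rr, pow_succ]
      simp only [mul_add, sub_mul, smul_mul_assoc, mul_smul_comm, mul_assoc, mul_neg_one,
        neg_smul]
      abel

lemma grassV_pow_le_even {m : ℕ} (hm : Even m) : grassV R n ^ m ≤ evenSub R n := by
  obtain ⟨j, rfl⟩ := hm
  exact le_iSup_of_le j (by rw [two_mul])

lemma grassV_pow_le_odd {m : ℕ} (hm : Odd m) : grassV R n ^ m ≤ oddSub R n := by
  obtain ⟨j, hj⟩ := hm
  subst hj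
  exact le_iSup (fun j : ℕ => grassV R n ^ (2 * j + 1)) j

/-- Induction over the even part. -/
lemma evenSub_induction {P : Λ → Prop} (h0 : P 0) (hadd : ∀ x y, P x → P y → P (x + y))
    (hpow : ∀ j : ℕ, ∀ a ∈ grassV R n ^ (2 * j), P a) {a : Λ} (ha : a ∈ evenSub R n) : P a :=
  Submodule.iSup_induction (fun j : ℕ => grassV R n ^ (2 * j)) (motive := P) ha
    (fun j x hx => hpow j x hx) h0 hadd

lemma oddSub_induction {P : Λ → Prop} (h0 : P 0) (hadd : ∀ x y, P x → P y → P (x + y))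
    (hpow : ∀ j : ℕ, ∀ a ∈ grassV R n ^ (2 * j + 1), P a) {a : Λ} (ha : a ∈ oddSub R n) :
    P a :=
  Submodule.iSup_induction (fun j : ℕ => grassV R n ^ (2 * j + 1)) (motive := P) ha
    (fun j x hx => hpow j x hx) h0 hadd

lemma grassC_even_mem {f : Module.Dual R (Fin n → R)} {a : Λ} (ha : a ∈ evenSub R n) :
    grassC f a ∈ oddSub R n := by
  refine evenSub_induction (P := fun a => grassC f a ∈ oddSub R n) (by simp)
    (fun x y hx hy => by
      show grassC f (x + y) ∈ oddSub R n
      rw [map_add]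
      exact Submodule.add_mem _ hx hy)
    (fun j a ha => ?_) ha
  show grassC f a ∈ oddSub R n
  have h := grassC_pow_mem f ha
  rcases Nat.eq_zero_or_pos j with rfl | hj
  · simp only [Nat.mul_zero, pow_zero] at ha
    obtain ⟨r, rfl⟩ := Submodule.mem_one.mp ha
    rw [grassC_algebraMap]; exact Submodule.zero_mem _
  · exact grassV_pow_le_odd ⟨j - 1, by omega⟩ h

lemma grassC_odd_mem {f : Module.Dual R (Fin n → R)} {a : Λ} (ha : a ∈ oddSub R n) :
    grassC f a ∈ evenSub R n := by
  refine oddSub_induction (P := fun a => grassC f a ∈ evenSub R n) (by simp)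
    (fun x y hx hy => by
      show grassC f (x + y) ∈ evenSub R n
      rw [map_add]
      exact Submodule.add_mem _ hx hy)
    (fun j a ha => ?_) ha
  show grassC f a ∈ evenSub R n
  have h := grassC_pow_mem f ha
  exact grassV_pow_le_even ⟨j, by omega⟩ h

lemma grassC_leibniz_even (f : Module.Dual R (Fin n → R)) {a : Λ} (ha : a ∈ evenSub R n)
    (b : Λ) : grassC f (a * b) = grassC f a * b + a * grassC f b := by
  refine evenSub_induction (P := fun a => ∀ b, grassC f (a * b)
      = grassC f a * b + a * grassC f b) (by simp) (fun x y hx hy b => ?_)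
      (fun j a ha b => ?_) ha b
  · simp only [add_mul, map_add, hx, hy]
    abel
  · have h := grassC_leibniz f ha b
    rwa [pow_mul, neg_one_sq, one_pow, one_smul] at h

lemma grassC_leibniz_odd (f : Module.Dual R (Fin n → R)) {a : Λ} (ha : a ∈ oddSub R n)
    (b : Λ) : grassC f (a * b) = grassC f a * b + (-1 : R) • (a * grassC f b) := by
  refine oddSub_induction (P := fun a => ∀ b, grassC f (a * b)
      = grassC f a * b + (-1 : R) • (a * grassC f b)) (by simp) (fun x y hx hy b => ?_)
      (fun j a ha b => ?_) ha b
  · simp only [add_mul, map_add, hx, hy, smul_add]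
    abel
  · have h := grassC_leibniz f ha b
    rwa [pow_succ, pow_mul, neg_one_sq, one_pow, one_mul] at h

/-- The contraction is an odd superderivation. -/
lemma grassC_isSuperDer (f : Module.Dual R (Fin n → R)) :
    IsSuperDer R n true (grassC f) :=
  ⟨⟨fun _ ha => grassC_even_mem ha, fun _ ha => grassC_odd_mem ha⟩,
    fun _ ha b => grassC_leibniz_even f ha b,
    fun _ ha b => grassC_leibniz_odd f ha b⟩

/-- Multiplication by `ι v` composed with contraction: an even superderivation. -/
noncomputable def grassD (v : Fin n → R) (f : Module.Dual R (Fin n → R)) : Module.End R Λ :=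
  (LinearMap.mulLeft R (ι R v)) ∘ₗ grassC f

lemma grassD_apply (v : Fin n → R) (f : Module.Dual R (Fin n → R)) (a : Λ) :
    grassD v f a = ι R v * grassC f a := rfl

lemma iota_mul_even {a : Λ} (ha : a ∈ evenSub R n) (v : Fin n → R) :
    ι R v * a ∈ oddSub R n := by
  refine evenSub_induction (P := fun a => ι R v * a ∈ oddSub R n) (by simp)
    (fun x y hx hy => by
      show ι R v * (x + y) ∈ oddSub R n
      rw [mul_add]
      exact Submodule.add_mem _ hx hy)
    (fun j a ha => ?_) ha
  show ι R v * a ∈ oddSub R n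
  have h : ι R v * a ∈ grassV R n ^ 1 * grassV R n ^ (2 * j) :=
    Submodule.mul_mem_mul (by simpa [pow_one] using ⟨v, rfl⟩) ha
  rw [← pow_add] at h
  have e : 1 + 2 * j = 2 * j + 1 := by omega
  rw [e] at h
  exact grassV_pow_le_odd ⟨j, rfl⟩ h

lemma iota_mul_odd {a : Λ} (ha : a ∈ oddSub R n) (v : Fin n → R) :
    ι R v * a ∈ evenSub R n := by
  refine oddSub_induction (P := fun a => ι R v * a ∈ evenSub R n) (by simp)
    (fun x y hx hy => by
      show ι R v * (x + y) ∈ evenSub R n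
      rw [mul_add]
      exact Submodule.add_mem _ hx hy)
    (fun j a ha => ?_) ha
  show ι R v * a ∈ evenSub R n
  have h : ι R v * a ∈ grassV R n ^ 1 * grassV R n ^ (2 * j + 1) :=
    Submodule.mul_mem_mul (by simpa [pow_one] using ⟨v, rfl⟩) ha
  rw [← pow_add] at h
  have e : 1 + (2 * j + 1) = 2 * (j + 1) := by omega
  rw [e] at h
  exact grassV_pow_le_even ⟨j + 1, by omega⟩ h

lemma grassD_leibniz_even (v : Fin n → R) (f : Module.Dual R (Fin n → R)) {a : Λ}
    (ha : a ∈ evenSub R n) (b : Λ) :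
    grassD v f (a * b) = grassD v f a * b + a * grassD v f b := by
  refine evenSub_induction (P := fun a => ∀ b, grassD v f (a * b)
      = grassD v f a * b + a * grassD v f b) (by simp [grassD_apply]) (fun x y hx hy b => ?_)
      (fun j a ha b => ?_) ha b
  · simp only [add_mul, map_add, hx, hy]
    abel
  · have hcomm : ι R v * a = a * ι R v := by
      have h := iota_mul_comm v ha
      rwa [pow_mul, neg_one_sq, one_pow, one_smul] at h
    rw [grassD_apply, grassC_leibniz f ha b, pow_mul, neg_one_sq, one_pow, one_smul, mul_add,
      grassD_apply, grassD_apply, ← mul_assoc, ← mul_assoc, hcomm, mul_assoc a]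

lemma grassD_leibniz_odd (v : Fin n → R) (f : Module.Dual R (Fin n → R)) {a : Λ}
    (ha : a ∈ oddSub R n) (b : Λ) :
    grassD v f (a * b) = grassD v f a * b + a * grassD v f b := by
  refine oddSub_induction (P := fun a => ∀ b, grassD v f (a * b)
      = grassD v f a * b + a * grassD v f b) (by simp [grassD_apply]) (fun x y hx hy b => ?_)
      (fun j a ha b => ?_) ha b
  · simp only [add_mul, map_add, hx, hy]
    abel
  · have hcomm : ι R v * a = -(a * ι R v) := by
      have h := iota_mul_comm v ha
      rwa [pow_succ, pow_mul, neg_one_sq, one_pow, one_mul, neg_one_smul] at h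
    rw [grassD_apply, grassC_leibniz f ha b, pow_succ, pow_mul, neg_one_sq, one_pow, one_mul,
      mul_add, grassD_apply, grassD_apply, ← mul_assoc, mul_smul_comm, neg_one_smul,
      ← mul_assoc, hcomm, neg_mul, neg_neg, mul_assoc a]

lemma grassD_isSuperDer (v : Fin n → R) (f : Module.Dual R (Fin n → R)) :
    IsSuperDer R n false (grassD v f) :=
  ⟨⟨fun a ha => iota_mul_odd (grassC_even_mem ha) v,
    fun a ha => iota_mul_even (grassC_odd_mem ha) v⟩,
    fun _ ha b => grassD_leibniz_even v f ha b,
    fun _ ha b => by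
      simpa using grassD_leibniz_odd v f ha b⟩

end Aux

/-- Every parity-preserving `R`-algebra automorphism of `Λ(n) ⊗ R` commuting with
all superderivations (i.e. with `W(n)(R)`) is the identity: the kernel of
`Ad : Aut Λ(n) → Aut W(n)` is trivial. -/
theorem stmt_16 (k : Type*) [Field k] [CharZero k]
    (R : Type*) [CommRing R] [Algebra k R] (n : ℕ)
    (φ : ExteriorAlgebra R (Fin n → R) ≃ₐ[R] ExteriorAlgebra R (Fin n → R))
    (hφe : ∀ a ∈ evenSub R n, φ a ∈ evenSub R n)
    (hφo : ∀ a ∈ oddSub R n, φ a ∈ oddSub R n)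
    (hc : ∀ (p : Bool) (D : Module.End R (ExteriorAlgebra R (Fin n → R))),
      IsSuperDer R n p D → ∀ a, φ (D a) = D (φ a)) :
    φ = AlgEquiv.refl := by
  have key : ∀ v : Fin n → R, φ (ι R v) = ι R v := by
    intro v
    rcases Nat.eq_zero_or_pos n with rfl | hn
    · have hv : (v : Fin 0 → R) = 0 := Subsingleton.elim _ _
      rw [hv, map_zero, map_zero]
    · set f : Module.Dual R (Fin n → R) := LinearMap.proj ⟨0, hn⟩
      set w : Fin n → R := Pi.single ⟨0, hn⟩ 1
      have hfw : f w = 1 := by simp [f, w]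
      have h1 := hc true (grassC f) (grassC_isSuperDer f) (ι R w)
      rw [grassC_ι, hfw, map_one, map_one] at h1
      have h2 := hc false (grassD v f) (grassD_isSuperDer v f) (ι R w)
      rw [grassD_apply, grassC_ι, hfw, map_one, mul_one, grassD_apply, ← h1, mul_one] at h2
      exact h2
  ext a
  induction a using ExteriorAlgebra.induction with
  | algebraMap r => simp
  | ι v => simpa using key v
  | mul x y hx hy => rw [map_mul, hx, hy]; simp
  | add x y hx hy => rw [map_add, hx, hy]; simp
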